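/- (Lemma 3(ii).) Let Φ₁, Φ₂ be unit vectors in ℂᵈ, let ε ∈ [0, 1], and suppose there is a three-outcome POVM (Π₀, Π₁, Π₂) with ⟨Φ₂, Π₁Φ₂⟩ = ⟨Φ₁, Π₂Φ₁⟩ = 0 and ⟨Φᵢ, Π₀Φᵢ⟩ ≤ ε for i = 1, 2. Then 2·√(1 − |⟨Φ₁, Φ₂⟩|²) ≥ 2·√(1 − ε²); that is, the trace distance between the pure states Φ₁ and Φ₂ is at least 2·√(1 − ε²). -/

import Mathlib

open Matrix ComplexOrder

open scoped MatrixOrder in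
lemma cs_psd_aux (d : ℕ) (P : Matrix (Fin d) (Fin d) ℂ) (hP : P.PosSemidef)
    (x y : Fin d → ℂ) :
    ‖star x ⬝ᵥ (P *ᵥ y)‖ ≤
      Real.sqrt (star x ⬝ᵥ (P *ᵥ x)).re * Real.sqrt (star y ⬝ᵥ (P *ᵥ y)).re := by
  obtain ⟨S, hS⟩ := CStarAlgebra.nonneg_iff_eq_star_mul_self.mp hP.nonneg
  have key : ∀ a b : Fin d → ℂ, star a ⬝ᵥ (P *ᵥ b) = star (S *ᵥ a) ⬝ᵥ (S *ᵥ b) := by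
    intro a b
    rw [hS, star_eq_conjTranspose, ← mulVec_mulVec, star_mulVec, ← dotProduct_mulVec]
  rw [key, key, key]
  set a := S *ᵥ x
  set b := S *ᵥ y
  have h1 : star a ⬝ᵥ b = @inner ℂ _ _ (WithLp.toLp 2 a : EuclideanSpace ℂ (Fin d)) (WithLp.toLp 2 b) := by
    rw [EuclideanSpace.inner_toLp_toLp, dotProduct_comm]
  have h2 : ∀ c : Fin d → ℂ, Real.sqrt (star c ⬝ᵥ c).re = ‖(WithLp.toLp 2 c : EuclideanSpace ℂ (Fin d))‖ := by
    intro c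
    have := @inner_self_eq_norm_sq ℂ _ _ _ _ (WithLp.toLp 2 c : EuclideanSpace ℂ (Fin d))
    rw [dotProduct_comm, ← EuclideanSpace.inner_toLp_toLp c c, ← RCLike.re_to_complex, this,
      Real.sqrt_sq (norm_nonneg _)]
  rw [h1, h2, h2]
  exact norm_inner_le_norm _ _

/-- Lemma 3(ii): if two states can be discriminated with one-sided error `ε` by a
three-outcome POVM, then their trace distance is at least `2√(1 - ε²)`. -/
theorem traceDist_ge_of_one_sided_error_povm (d : ℕ) (Φ₁ Φ₂ : Fin d → ℂ)
    (hΦ₁ : star Φ₁ ⬝ᵥ Φ₁ = 1) (hΦ₂ : star Φ₂ ⬝ᵥ Φ₂ = 1)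
    (ε : ℝ) (hε : ε ∈ Set.Icc (0 : ℝ) 1)
    (P₀ P₁ P₂ : Matrix (Fin d) (Fin d) ℂ)
    (hP₀ : P₀.PosSemidef) (hP₁ : P₁.PosSemidef) (hP₂ : P₂.PosSemidef)
    (hsum : P₀ + P₁ + P₂ = 1)
    (he₁ : star Φ₂ ⬝ᵥ (P₁ *ᵥ Φ₂) = 0) (he₂ : star Φ₁ ⬝ᵥ (P₂ *ᵥ Φ₁) = 0)
    (hi₁ : star Φ₁ ⬝ᵥ (P₀ *ᵥ Φ₁) ≤ ((ε : ℝ) : ℂ))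
    (hi₂ : star Φ₂ ⬝ᵥ (P₀ *ᵥ Φ₂) ≤ ((ε : ℝ) : ℂ)) :
    2 * Real.sqrt (1 - ε ^ 2) ≤
      2 * Real.sqrt (1 - ‖star Φ₁ ⬝ᵥ Φ₂‖ ^ 2) := by
  obtain ⟨hε0, hε1⟩ := hε
  -- real parts of the error bounds
  have hr₁ : (star Φ₁ ⬝ᵥ (P₀ *ᵥ Φ₁)).re ≤ ε := by
    have := (Complex.le_def.mp hi₁).1
    simpa using this
  have hr₂ : (star Φ₂ ⬝ᵥ (P₀ *ᵥ Φ₂)).re ≤ ε := by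
    have := (Complex.le_def.mp hi₂).1
    simpa using this
  -- decomposition of the inner product
  have hdec : star Φ₁ ⬝ᵥ Φ₂ =
      star Φ₁ ⬝ᵥ (P₀ *ᵥ Φ₂) + star Φ₁ ⬝ᵥ (P₁ *ᵥ Φ₂) + star Φ₁ ⬝ᵥ (P₂ *ᵥ Φ₂) := by
    conv_lhs => rw [← Matrix.one_mulVec Φ₂, ← hsum]
    rw [add_mulVec, add_mulVec, dotProduct_add, dotProduct_add]
  -- bound each term
  have h0 := cs_psd_aux d P₀ hP₀ Φ₁ Φ₂
  have h1 := cs_psd_aux d P₁ hP₁ Φ₁ Φ₂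
  have h2 := cs_psd_aux d P₂ hP₂ Φ₁ Φ₂
  rw [he₁] at h1
  rw [he₂] at h2
  simp only [Complex.zero_re, Real.sqrt_zero, mul_zero, zero_mul] at h1 h2
  have hb0 : ‖star Φ₁ ⬝ᵥ (P₀ *ᵥ Φ₂)‖ ≤ ε := by
    refine h0.trans ?_
    calc Real.sqrt (star Φ₁ ⬝ᵥ (P₀ *ᵥ Φ₁)).re * Real.sqrt (star Φ₂ ⬝ᵥ (P₀ *ᵥ Φ₂)).re
        ≤ Real.sqrt ε * Real.sqrt ε := by
          exact mul_le_mul (Real.sqrt_le_sqrt hr₁) (Real.sqrt_le_sqrt hr₂)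
            (Real.sqrt_nonneg _) (Real.sqrt_nonneg _)
      _ = ε := Real.mul_self_sqrt hε0
  -- total bound
  have habs : ‖star Φ₁ ⬝ᵥ Φ₂‖ ≤ ε := by
    rw [hdec]
    calc ‖star Φ₁ ⬝ᵥ (P₀ *ᵥ Φ₂) + star Φ₁ ⬝ᵥ (P₁ *ᵥ Φ₂) + star Φ₁ ⬝ᵥ (P₂ *ᵥ Φ₂)‖
        ≤ ‖star Φ₁ ⬝ᵥ (P₀ *ᵥ Φ₂) + star Φ₁ ⬝ᵥ (P₁ *ᵥ Φ₂)‖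
            + ‖star Φ₁ ⬝ᵥ (P₂ *ᵥ Φ₂)‖ := norm_add_le _ _
      _ ≤ (‖star Φ₁ ⬝ᵥ (P₀ *ᵥ Φ₂)‖ + ‖star Φ₁ ⬝ᵥ (P₁ *ᵥ Φ₂)‖)
            + ‖star Φ₁ ⬝ᵥ (P₂ *ᵥ Φ₂)‖ := by gcongr; exact norm_add_le _ _
      _ ≤ ε := by linarith
  have hsq : ‖star Φ₁ ⬝ᵥ Φ₂‖ ^ 2 ≤ ε ^ 2 :=
    pow_le_pow_left₀ (norm_nonneg _) habs 2
  have : Real.sqrt (1 - ε ^ 2) ≤ Real.sqrt (1 - ‖star Φ₁ ⬝ᵥ Φ₂‖ ^ 2) :=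
    Real.sqrt_le_sqrt (by linarith)
  linarith
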